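/- Truncation error at N = N_δ with explicit constant: assume the sequence {μ_k/ξ_k} is monotone nonincreasing with μ_k/ξ_k → 0, and let δ > 0 satisfy δ < 1/ξ_0 (so N_δ ≥ 1). Then ε_δ(A,W,G̃_{N_δ},Ψ̃_{N_δ})_H ≤ ( μ_{N_δ}²/ξ_{N_δ}² + μ_{N_δ−1}²/ξ_{N_δ−1}² )^{1/2} ≤ K_δ · μ_{N_δ}/ξ_{N_δ}, where K_δ := ( 1 + ( (ξ_{N_δ}/μ_{N_δ}) · (μ_{N_δ−1}/ξ_{N_δ−1}) )² )^{1/2}. -/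

import Mathlib

noncomputable section

open Filter
open scoped ENNReal RealInnerProductSpace

variable {H : Type*} [NormedAddCommGroup H] [InnerProductSpace ℝ H] [CompleteSpace H]

/-- `f` belongs to the source set `W`. -/
def MemW (w : ℕ → H) (ξ : ℕ → ℝ) (f : H) : Prop :=
  Summable fun k => ξ k ^ 2 * ⟪f, w k⟫ ^ 2

/-- The `W`-norm of `f`. -/
def normW (w : ℕ → H) (ξ : ℕ → ℝ) (f : H) : ℝ :=
  Real.sqrt (∑' k, ξ k ^ 2 * ⟪f, w k⟫ ^ 2)

/-- The unbounded operator `A`, defined spectrally by `A f = ∑ μ_k ⟨f, w_k⟩ w_k`. -/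
def opA (w : ℕ → H) (μ : ℕ → ℝ) (f : H) : H :=
  ∑' k, (μ k * ⟪f, w k⟫) • w k

/-- The worst case recovery error `ε_δ(A, W, G, Ψ)_H` of the pair `(G, Ψ)`. -/
def recErr (w : ℕ → H) (μ ξ : ℕ → ℝ) (δ : ℝ) {N : ℕ}
    (G : H → Fin N → ℝ) (Ψ : (Fin N → ℝ) → H) : ℝ≥0∞ :=
  ⨆ (f : H) (_ : MemW w ξ f ∧ normW w ξ f ≤ 1) (fδ : H) (_ : ‖f - fδ‖ ≤ δ),
    ENNReal.ofReal ‖opA w μ f - Ψ (G fδ)‖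

/-- The `(N,δ)`-optimal recovery error `R_{N,δ}(A, W)_H`. -/
def Ropt (w : ℕ → H) (μ ξ : ℕ → ℝ) (δ : ℝ) (N : ℕ) : ℝ≥0∞ :=
  ⨅ (G : H → Fin N → ℝ) (_ : Continuous G) (Ψ : (Fin N → ℝ) → H),
    recErr w μ ξ δ G Ψ

/-- The `δ`-optimal recovery error `R_δ(A, W)_H`. -/
def RoptAll (w : ℕ → H) (μ ξ : ℕ → ℝ) (δ : ℝ) : ℝ≥0∞ :=
  ⨅ N : ℕ, Ropt w μ ξ δ N

/-- The critical index `N_δ = min {N ≥ 0 : ξ_N ≥ 1/δ}`. -/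
def Ncrit (ξ : ℕ → ℝ) (δ : ℝ) : ℕ := sInf {N : ℕ | 1 / δ ≤ ξ N}

/-- The information map of the truncation method: the first `N` Fourier coefficients. -/
def Gtrunc (w : ℕ → H) (N : ℕ) (f : H) : Fin N → ℝ := fun k => ⟪f, w k⟫

/-- The recovery algorithm of the truncation method. -/
def Psitrunc (w : ℕ → H) (μ : ℕ → ℝ) (N : ℕ) (x : Fin N → ℝ) : H :=
  ∑ k : Fin N, (μ k * x k) • w k

set_option linter.unusedSectionVars false in
lemma ortho_summable {w : ℕ → H} (hw : Orthonormal ℝ w) {c : ℕ → ℝ}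
    (h : Summable fun k => c k ^ 2) : Summable fun k => c k • w k := by
  have h' : Summable fun k => ‖c k‖ ^ 2 := by simpa [Real.norm_eq_abs, sq_abs] using h
  have := (hw.orthogonalFamily.summable_iff_norm_sq_summable c).2 h'
  simpa [LinearIsometry.toSpanSingleton_apply] using this

set_option linter.unusedSectionVars false in
lemma ortho_hasSum_sq {w : ℕ → H} (hw : Orthonormal ℝ w) {c : ℕ → ℝ} {x : H}
    (h : HasSum (fun k => c k • w k) x) : HasSum (fun k => c k ^ 2) (‖x‖ ^ 2) := by
  have hcont : Continuous fun y : H => ‖y‖ ^ 2 := (continuous_norm.pow 2)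
  have h2 : Tendsto (fun s : Finset ℕ => ‖∑ k ∈ s, c k • w k‖ ^ 2) atTop (nhds (‖x‖ ^ 2)) :=
    (hcont.tendsto x).comp h
  have h3 : ∀ s : Finset ℕ, ‖∑ k ∈ s, c k • w k‖ ^ 2 = ∑ k ∈ s, c k ^ 2 := by
    intro s
    have := hw.orthogonalFamily.norm_sum c s
    simpa [LinearIsometry.toSpanSingleton_apply, Real.norm_eq_abs, sq_abs] using this
  exact (h2.congr (fun s => h3 s))


/-- truncation error at `N = N_δ` with explicit constant `K_δ`. -/
theorem stmt7
    (w : ℕ → H) (hw_on : Orthonormal ℝ w)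
    (hw_dense : Dense (Submodule.span ℝ (Set.range w) : Set H))
    (μ ξ : ℕ → ℝ)
    (hμ0 : 0 < μ 0) (hμmono : Monotone μ) (hμtop : Tendsto μ atTop atTop)
    (hξ0 : 0 < ξ 0) (hξmono : Monotone ξ) (hξtop : Tendsto ξ atTop atTop)
    (hratio : Tendsto (fun k => μ k / ξ k) atTop (nhds 0))
    (hanti : Antitone fun k => μ k / ξ k) :
    ∀ δ : ℝ, 0 < δ → δ < 1 / ξ 0 →
      recErr w μ ξ δ (Gtrunc w (Ncrit ξ δ)) (Psitrunc w μ (Ncrit ξ δ)) ≤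
          ENNReal.ofReal (Real.sqrt
            ((μ (Ncrit ξ δ) / ξ (Ncrit ξ δ)) ^ 2 +
              (μ (Ncrit ξ δ - 1) / ξ (Ncrit ξ δ - 1)) ^ 2)) ∧
        ENNReal.ofReal (Real.sqrt
            ((μ (Ncrit ξ δ) / ξ (Ncrit ξ δ)) ^ 2 +
              (μ (Ncrit ξ δ - 1) / ξ (Ncrit ξ δ - 1)) ^ 2)) ≤
          ENNReal.ofReal (Real.sqrt
              (1 + (ξ (Ncrit ξ δ) / μ (Ncrit ξ δ) *
                (μ (Ncrit ξ δ - 1) / ξ (Ncrit ξ δ - 1))) ^ 2) *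
            (μ (Ncrit ξ δ) / ξ (Ncrit ξ δ))) := by
  intro δ hδ hδ0
  have hξpos : ∀ k, 0 < ξ k := fun k => lt_of_lt_of_le hξ0 (hξmono (Nat.zero_le k))
  have hμpos : ∀ k, 0 < μ k := fun k => lt_of_lt_of_le hμ0 (hμmono (Nat.zero_le k))
  set N := Ncrit ξ δ with hNdef
  have hSne : {n : ℕ | 1 / δ ≤ ξ n}.Nonempty := (hξtop.eventually_ge_atTop (1 / δ)).exists
  have hNmem : 1 / δ ≤ ξ N := Nat.sInf_mem hSne
  have hN1 : 1 ≤ N := by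
    rcases Nat.eq_zero_or_pos N with h0 | h
    · exfalso
      have h3 : 1 / δ ≤ ξ 0 := h0 ▸ hNmem
      have h1 : δ * ξ 0 < 1 := (lt_div_iff₀ hξ0).mp hδ0
      have h2 : 1 ≤ ξ 0 * δ := (div_le_iff₀ hδ).mp h3
      nlinarith
    · exact h
  have hNm1 : ξ (N - 1) < 1 / δ := by
    have hlt : N - 1 < N := Nat.sub_lt (by omega) one_pos
    have : (N - 1) ∉ {n : ℕ | 1 / δ ≤ ξ n} := Nat.notMem_of_lt_sInf hlt
    simpa [Set.mem_setOf_eq, not_le] using this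
  have hδle : δ ≤ 1 / ξ (N - 1) := by
    rw [le_div_iff₀ (hξpos _)]
    have := (lt_div_iff₀ hδ).mp hNm1
    nlinarith
  set a : ℝ := μ N / ξ N with ha
  set b : ℝ := μ (N - 1) / ξ (N - 1) with hb
  have hapos : 0 < a := div_pos (hμpos N) (hξpos N)
  have hbpos : 0 < b := div_pos (hμpos _) (hξpos _)
  constructor
  · -- main estimate
    refine iSup_le fun f => iSup_le fun hf => iSup_le fun fδ => iSup_le fun hd => ?_
    apply ENNReal.ofReal_le_ofReal
    obtain ⟨hfW, hfn⟩ := hf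
    have hfW' : Summable fun k => ξ k ^ 2 * ⟪f, w k⟫ ^ 2 := hfW
    have hfn' : Real.sqrt (∑' k, ξ k ^ 2 * ⟪f, w k⟫ ^ 2) ≤ 1 := hfn
    have htsum_nonneg : 0 ≤ ∑' k, ξ k ^ 2 * ⟪f, w k⟫ ^ 2 :=
      tsum_nonneg fun k => by positivity
    have hWsum : ∑' k, ξ k ^ 2 * ⟪f, w k⟫ ^ 2 ≤ 1 := by
      nlinarith [Real.sq_sqrt htsum_nonneg, Real.sqrt_nonneg (∑' k, ξ k ^ 2 * ⟪f, w k⟫ ^ 2)]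
    have hratio0 : ∀ k, μ k / ξ k ≤ μ 0 / ξ 0 := fun k => hanti (Nat.zero_le k)
    have hAsummable : Summable fun k => (μ k * ⟪f, w k⟫) ^ 2 := by
      refine Summable.of_nonneg_of_le (fun k => sq_nonneg _) (fun k => ?_)
        (hfW'.mul_left ((μ 0 / ξ 0) ^ 2))
      have hξk := hξpos k
      have hk : (μ k * ⟪f, w k⟫) ^ 2 = (μ k / ξ k) ^ 2 * (ξ k ^ 2 * ⟪f, w k⟫ ^ 2) := by
        field_simp
      rw [hk]
      apply mul_le_mul_of_nonneg_right _ (by positivity)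
      have h0 : 0 ≤ μ k / ξ k := le_of_lt (div_pos (hμpos k) (hξpos k))
      exact pow_le_pow_left₀ h0 (hratio0 k) 2
    have hA : Summable fun k => (μ k * ⟪f, w k⟫) • w k := ortho_summable hw_on hAsummable
    have hAsum : HasSum (fun k => (μ k * ⟪f, w k⟫) • w k) (opA w μ f) := hA.hasSum
    have hB : HasSum (fun k => if k < N then (μ k * ⟪fδ, w k⟫) • w k else 0)
        (Psitrunc w μ N (Gtrunc w N fδ)) := by
      have h1 : ∀ k ∉ Finset.range N,
          (if k < N then (μ k * ⟪fδ, w k⟫) • w k else 0) = 0 := by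
        intro k hk
        rw [Finset.mem_range] at hk
        simp [hk]
      have h2 := hasSum_sum_of_ne_finset_zero (L := SummationFilter.unconditional ℕ) (s := Finset.range N)
        (f := fun k => if k < N then (μ k * ⟪fδ, w k⟫) • w k else 0) h1
      convert h2 using 1
      rw [Psitrunc, Finset.sum_ite_of_true (fun k hk => Finset.mem_range.mp hk)]
      exact (Fin.sum_univ_eq_sum_range (fun k => (μ k * ⟪fδ, w k⟫) • w k) N).trans
        (by simp [Gtrunc])
    set c : ℕ → ℝ := fun k => if k < N then μ k * ⟪f - fδ, w k⟫ else μ k * ⟪f, w k⟫ with hc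
    have hfun : (fun k => (μ k * ⟪f, w k⟫) • w k -
        (if k < N then (μ k * ⟪fδ, w k⟫) • w k else 0)) = fun k => c k • w k := by
      funext k
      by_cases hk : k < N
      · simp only [hc, if_pos hk, inner_sub_left, mul_sub, sub_smul]
      · simp [hc, if_neg hk]
    have hE : HasSum (fun k => c k • w k)
        (opA w μ f - Psitrunc w μ N (Gtrunc w N fδ)) := by
      rw [← hfun]
      exact hAsum.sub hB
    have hEsq : HasSum (fun k => c k ^ 2)
        (‖opA w μ f - Psitrunc w μ N (Gtrunc w N fδ)‖ ^ 2) := ortho_hasSum_sq hw_on hE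
    have hsplit := Summable.sum_add_tsum_compl (s := Finset.range N) hEsq.summable
    have hbd1 : ∑ k ∈ Finset.range N, c k ^ 2 ≤ b ^ 2 := by
      have h1 : ∀ k ∈ Finset.range N, c k ^ 2 ≤ μ (N-1) ^ 2 * ⟪f - fδ, w k⟫ ^ 2 := by
        intro k hk
        rw [Finset.mem_range] at hk
        have hck : c k = μ k * ⟪f - fδ, w k⟫ := if_pos hk
        rw [hck, mul_pow]
        apply mul_le_mul_of_nonneg_right _ (sq_nonneg _)
        exact pow_le_pow_left₀ (le_of_lt (hμpos k)) (hμmono (by omega)) 2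
      calc ∑ k ∈ Finset.range N, c k ^ 2
          ≤ ∑ k ∈ Finset.range N, μ (N-1) ^ 2 * ⟪f - fδ, w k⟫ ^ 2 :=
            Finset.sum_le_sum h1
        _ = μ (N-1) ^ 2 * ∑ k ∈ Finset.range N, ⟪f - fδ, w k⟫ ^ 2 := by
            rw [Finset.mul_sum]
        _ ≤ μ (N-1) ^ 2 * ‖f - fδ‖ ^ 2 := by
            apply mul_le_mul_of_nonneg_left _ (sq_nonneg _)
            have := hw_on.sum_inner_products_le (s := Finset.range N) (f - fδ)
            simpa [Real.norm_eq_abs, sq_abs, real_inner_comm] using this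
        _ ≤ μ (N-1) ^ 2 * δ ^ 2 := by
            apply mul_le_mul_of_nonneg_left _ (sq_nonneg _)
            exact pow_le_pow_left₀ (norm_nonneg _) hd 2
        _ ≤ b ^ 2 := by
            have h1 : μ (N-1) * δ ≤ b := by
              rw [hb, div_eq_mul_inv, ← one_div]
              exact mul_le_mul_of_nonneg_left hδle (le_of_lt (hμpos _))
            calc μ (N-1) ^ 2 * δ ^ 2 = (μ (N-1) * δ) ^ 2 := by ring
              _ ≤ b ^ 2 := pow_le_pow_left₀ (mul_nonneg (hμpos _).le hδ.le) h1 2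
    have hbd2 : ∑' (k : (((Finset.range N : Finset ℕ) : Set ℕ)ᶜ : Set ℕ)), c (k : ℕ) ^ 2
        ≤ a ^ 2 := by
      have hg : Summable fun k => a ^ 2 * (ξ k ^ 2 * ⟪f, w k⟫ ^ 2) := hfW'.mul_left _
      have hterm : ∀ k : (((Finset.range N : Finset ℕ) : Set ℕ)ᶜ : Set ℕ),
          c (k : ℕ) ^ 2 ≤ a ^ 2 * (ξ (k : ℕ) ^ 2 * ⟪f, w (k : ℕ)⟫ ^ 2) := by
        rintro ⟨k, hk⟩
        simp only [Set.mem_compl_iff, Finset.coe_range, Set.mem_Iio, not_lt] at hk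
        have hck : c k = μ k * ⟪f, w k⟫ := if_neg (not_lt.mpr hk)
        have hξk := hξpos k
        have hkk : (μ k * ⟪f, w k⟫) ^ 2 = (μ k / ξ k) ^ 2 * (ξ k ^ 2 * ⟪f, w k⟫ ^ 2) := by
          field_simp
        rw [hck, hkk]
        apply mul_le_mul_of_nonneg_right _ (by positivity)
        have h0 : 0 ≤ μ k / ξ k := le_of_lt (div_pos (hμpos k) (hξpos k))
        exact pow_le_pow_left₀ h0 (hanti hk) 2
      calc ∑' (k : (((Finset.range N : Finset ℕ) : Set ℕ)ᶜ : Set ℕ)), c (k : ℕ) ^ 2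
          ≤ ∑' (k : (((Finset.range N : Finset ℕ) : Set ℕ)ᶜ : Set ℕ)),
              a ^ 2 * (ξ (k : ℕ) ^ 2 * ⟪f, w (k : ℕ)⟫ ^ 2) :=
            Summable.tsum_le_tsum hterm (hEsq.summable.subtype _) (hg.subtype _)
        _ ≤ ∑' k, a ^ 2 * (ξ k ^ 2 * ⟪f, w k⟫ ^ 2) :=
            Summable.tsum_subtype_le _ _ (fun k => by positivity) hg
        _ = a ^ 2 * ∑' k, ξ k ^ 2 * ⟪f, w k⟫ ^ 2 := tsum_mul_left
        _ ≤ a ^ 2 * 1 := mul_le_mul_of_nonneg_left hWsum (sq_nonneg a)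
        _ = a ^ 2 := mul_one _
    have hnorm2 : ‖opA w μ f - Psitrunc w μ N (Gtrunc w N fδ)‖ ^ 2 ≤ a ^ 2 + b ^ 2 := by
      rw [← hEsq.tsum_eq, ← hsplit]
      linarith
    have hfinal := Real.sqrt_le_sqrt hnorm2
    rwa [Real.sqrt_sq (norm_nonneg _)] at hfinal
  · apply ENNReal.ofReal_le_ofReal
    have hμN : μ N ≠ 0 := ne_of_gt (hμpos N)
    have hξN : ξ N ≠ 0 := ne_of_gt (hξpos N)
    have hξN1 : ξ (N - 1) ≠ 0 := ne_of_gt (hξpos _)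
    have hkey : Real.sqrt (1 + (ξ N / μ N * b) ^ 2) * a = Real.sqrt (a ^ 2 + b ^ 2) := by
      rw [← Real.sqrt_sq (le_of_lt hapos), ← Real.sqrt_mul (by positivity),
        Real.sqrt_sq (le_of_lt hapos)]
      congr 1
      rw [ha, hb]
      field_simp
    exact le_of_eq hkey.symm
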